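/- arXiv:2111.14487 — 2 statements merged into one kernel-verified Lean document; each statement's English description precedes it below -/
import Mathlib

section
/- If ξ > 0 satisfies tanh(ξ) = ξ - 1/6 and x = sech(ξ)², then (3/2)·∫_x^1 (1-y)^(1/2)/y dy = 1/2. -/
/-- If `ξ > 0` satisfies `tanh ξ = ξ - 1/6` and `x = sech(ξ)²`, then
`(3/2) · ∫_x^1 √(1-y)/y dy = 1/2`. -/
theorem median_eq_a_three_halves (ξ x : ℝ) (hξ : 0 < ξ)
    (htanh : Real.tanh ξ = ξ - 1 / 6) (hx : x = (1 / Real.cosh ξ) ^ 2) :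
    (3 / 2) * ∫ y in x..1, Real.sqrt (1 - y) / y = 1 / 2 := by
  set t : ℝ := Real.tanh ξ with ht
  have hcosh : 0 < Real.cosh ξ := Real.cosh_pos ξ
  have hsinh : 0 < Real.sinh ξ := Real.sinh_pos_iff.2 hξ
  have ht0 : 0 < t := by
    rw [ht, Real.tanh_eq_sinh_div_cosh]; exact div_pos hsinh hcosh
  have ht1 : t < 1 := by
    rw [ht, Real.tanh_eq_sinh_div_cosh]
    rw [div_lt_one hcosh]
    nlinarith [Real.cosh_sub_sinh ξ, Real.exp_pos (-ξ)]
  -- x = 1 - t²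
  have hxt : x = 1 - t ^ 2 := by
    rw [hx, ht, Real.tanh_eq_sinh_div_cosh]
    field_simp
    try nlinarith [Real.cosh_sq_sub_sinh_sq ξ]
  have hx0 : 0 < x := by nlinarith
  have hx1 : x < 1 := by nlinarith
  -- log ((1+t)/(1-t)) = 2ξ
  have hlog : Real.log (1 + t) - Real.log (1 - t) = 2 * ξ := by
    have h1 : 1 + t = Real.exp ξ / Real.cosh ξ := by
      rw [ht, Real.tanh_eq_sinh_div_cosh, ← Real.cosh_add_sinh]
      field_simp
    have h2 : 1 - t = Real.exp (-ξ) / Real.cosh ξ := by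
      rw [ht, Real.tanh_eq_sinh_div_cosh, ← Real.cosh_sub_sinh]
      field_simp
    rw [h1, h2, Real.log_div (Real.exp_ne_zero _) (ne_of_gt hcosh),
      Real.log_div (Real.exp_ne_zero _) (ne_of_gt hcosh), Real.log_exp, Real.log_exp]
    ring
  -- antiderivative
  set F : ℝ → ℝ := fun y => 2 * Real.sqrt (1 - y) - Real.log (1 + Real.sqrt (1 - y))
      + Real.log (1 - Real.sqrt (1 - y)) with hF
  have hsqx : Real.sqrt (1 - x) = t := by
    rw [hxt]; simpa using Real.sqrt_sq ht0.le
  have key : ∫ y in x..1, Real.sqrt (1 - y) / y = F 1 - F x := by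
    apply intervalIntegral.integral_eq_sub_of_hasDerivAt_of_le hx1.le
    · -- continuity of F on Icc x 1
      have hsle : ∀ y ∈ Set.Icc x 1, Real.sqrt (1 - y) < 1 := by
        intro y hy
        calc Real.sqrt (1 - y) ≤ Real.sqrt (1 - x) := by
              apply Real.sqrt_le_sqrt; linarith [hy.1]
          _ = t := hsqx
          _ < 1 := ht1
      apply ContinuousOn.add
      apply ContinuousOn.sub
      · exact (continuous_const.mul (Real.continuous_sqrt.comp
          (continuous_const.sub continuous_id))).continuousOn
      · apply ContinuousOn.log
        · exact (continuous_const.add (Real.continuous_sqrt.comp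
            (continuous_const.sub continuous_id))).continuousOn
        · intro y hy
          have := Real.sqrt_nonneg (1 - y); positivity
      · apply ContinuousOn.log
        · exact (continuous_const.sub (Real.continuous_sqrt.comp
            (continuous_const.sub continuous_id))).continuousOn
        · intro y hy
          have h2 := hsle y hy; intro h; nlinarith [Real.sqrt_nonneg (1 - y)]
    · -- derivative on Ioo
      intro y hy
      obtain ⟨hy0, hy1⟩ := hy
      have hy0' : 0 < y := hx0.trans hy0
      have h1y : 0 < 1 - y := by linarith
      set u : ℝ := Real.sqrt (1 - y) with hu
      have hu0 : 0 < u := Real.sqrt_pos.2 h1y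
      have hu2 : u ^ 2 = 1 - y := Real.sq_sqrt h1y.le
      have hu1 : u < 1 := by
        nlinarith
      have hd0 : HasDerivAt (fun y : ℝ => 1 - y) (-1) y := by
        simpa using (hasDerivAt_id y).const_sub 1
      have hds : HasDerivAt (fun y : ℝ => Real.sqrt (1 - y)) (-1 / (2 * u)) y :=
        hd0.sqrt (by positivity)
      have hl1 : HasDerivAt (fun y : ℝ => Real.log (1 + Real.sqrt (1 - y)))
          ((-1 / (2 * u)) / (1 + u)) y := by
        have : HasDerivAt (fun y : ℝ => 1 + Real.sqrt (1 - y)) (-1 / (2 * u)) y := by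
          simpa using hds.const_add 1
        exact this.log (by positivity)
      have hl2 : HasDerivAt (fun y : ℝ => Real.log (1 - Real.sqrt (1 - y)))
          ((- (-1 / (2 * u))) / (1 - u)) y := by
        have : HasDerivAt (fun y : ℝ => 1 - Real.sqrt (1 - y)) (-(-1 / (2 * u))) y :=
          hds.const_sub 1
        exact this.log (by linarith)
      have hder := ((hds.const_mul 2).sub hl1).add hl2
      have heq : Real.sqrt (1 - y) / y
          = 2 * (-1 / (2 * u)) - -1 / (2 * u) / (1 + u) + -(-1 / (2 * u)) / (1 - u) := by
        rw [← hu, show y = 1 - u ^ 2 from by linarith]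
        have h1u : (1 : ℝ) - u ≠ 0 := by linarith
        have h1u' : (1 : ℝ) + u ≠ 0 := by positivity
        have h2u : (1 : ℝ) - u ^ 2 ≠ 0 := by nlinarith
        field_simp
        ring
      rw [heq]
      exact hder
    · -- integrability
      apply ContinuousOn.intervalIntegrable
      apply ContinuousOn.div
      · exact (Real.continuous_sqrt.comp (continuous_const.sub continuous_id)).continuousOn
      · exact continuousOn_id
      · intro y hy
        rw [Set.uIcc_of_le hx1.le] at hy
        exact ne_of_gt (hx0.trans_le hy.1)
  have hF1 : F 1 = 0 := by simp [hF]
  have hFx : F x = 2 * t - (Real.log (1 + t) - Real.log (1 - t)) := by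
    rw [hF]; simp only [hsqx]; ring
  rw [key, hF1, hFx, hlog]
  rw [htanh] at *
  ring
end

section
/- A permutation σ of a finite set is a square (σ = τ² for some permutation τ) if and only if for every positive integer ℓ, the number of cycles of σ of length 2ℓ is even. -/
open Equiv Equiv.Perm

namespace SquarePermAux

/-- The cycle type of the square of a single cycle of length `n`. -/
def sqType (n : ℕ) : Multiset ℕ :=
  if Odd n then {n} else if n = 2 then 0 else {n / 2, n / 2}

variable {α : Type*} [Fintype α] [DecidableEq α]

lemma cycleType_sq_of_isCycle (c : Equiv.Perm α) (hc : c.IsCycle) :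
    (c * c).cycleType = sqType c.support.card := by
  classical
  have h2 : 2 ≤ c.support.card := hc.two_le_card_support
  by_cases hodd : Odd c.support.card
  · have hcop : Nat.Coprime 2 (orderOf c) := by
      rw [hc.orderOf]
      exact hodd.coprime_two_left
    have hcyc2 : IsCycle (c ^ 2) := hc.pow_iff.mpr hcop
    have hsupp : (c ^ 2).support = c.support := support_pow_coprime hcop
    rw [show c * c = c ^ 2 by rw [sq]]
    rw [hcyc2.cycleType, hsupp, sqType, if_pos hodd]
  · by_cases h2' : c.support.card = 2
    · have hord : orderOf c = 2 := by rw [hc.orderOf, h2']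
      have : c * c = 1 := by rw [← sq, ← hord, pow_orderOf_eq_one]
      rw [this, cycleType_one, sqType, if_neg hodd, if_pos h2']
    · -- even length at least 4
      obtain ⟨m, hm⟩ : ∃ m, c.support.card = 2 * m := by
        obtain ⟨m, hm⟩ := Nat.not_odd_iff_even.mp hodd
        exact ⟨m, by omega⟩
      have hm2 : 2 ≤ m := by omega
      obtain ⟨x, hx1, hx2⟩ := id hc
      have hord : orderOf c = 2 * m := by rw [hc.orderOf, hm]
      set g := c * c with hg
      -- powers of g are powers of c
      have hpow : ∀ k : ℕ, g ^ k = c ^ (2 * k) := by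
        intro k; rw [hg, ← sq, ← pow_mul]
      have hzpow : ∀ k : ℤ, g ^ k = c ^ (2 * k) := by
        intro k; rw [hg, ← sq, ← zpow_natCast c 2, ← zpow_mul]; norm_num
      -- basic non-fixed points
      have hne_one : ∀ k : ℕ, 0 < k → k < 2 * m → c ^ k ≠ 1 := by
        intro k hk0 hk1 h
        have := orderOf_dvd_of_pow_eq_one h
        rw [hord] at this
        exact absurd (Nat.le_of_dvd hk0 this) (by omega)
      have hgx : g x ≠ x := by
        intro h
        have : c ^ 2 = 1 := (hc.pow_eq_one_iff' hx1).mpr (by rwa [sq])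
        exact hne_one 2 (by norm_num) (by omega) this
      have hcx1 : c (c x) ≠ c x := fun h => hx1 (c.injective h)
      have hgcx : g (c x) ≠ c x := by
        intro h
        have : c ^ 2 = 1 := (hc.pow_eq_one_iff' hcx1).mpr (by rwa [sq])
        exact hne_one 2 (by norm_num) (by omega) this
      -- x and c x are not in the same g-cycle
      have hnotsame : ¬ g.SameCycle x (c x) := by
        intro hsc
        obtain ⟨k, -, hk⟩ := hsc.exists_pow_eq'
        rw [hpow] at hk
        rcases Nat.eq_zero_or_pos k with rfl | hkpos
        · simp at hk; exact hx1 hk.symm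
        · have hk' : c ((c ^ (2 * k - 1)) x) = c x := by
            have : c * c ^ (2 * k - 1) = c ^ (2 * k) := by
              rw [← pow_succ']; congr 1; omega
            rw [← Equiv.Perm.mul_apply, this, hk]
          have hfix : (c ^ (2 * k - 1)) x = x := c.injective hk'
          have h1 : c ^ (2 * k - 1) = 1 := (hc.pow_eq_one_iff' hx1).mpr hfix
          have := orderOf_dvd_of_pow_eq_one h1
          rw [hord] at this
          have h2 : 2 ∣ 2 * k - 1 := dvd_trans ⟨m, rfl⟩ this
          omega
      -- mapping between the two g-cycles
      have hmap : ∀ z, g.SameCycle x z → g.SameCycle (c x) (c z) := by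
        rintro z ⟨i, hi⟩
        refine ⟨i, ?_⟩
        have hcomm : Commute c (g ^ i) := (Commute.refl c).mul_right (Commute.refl c) |>.zpow_right i
        calc (g ^ i) (c x) = (g ^ i * c) x := rfl
          _ = (c * g ^ i) x := by rw [hcomm.eq]
          _ = c z := by rw [Equiv.Perm.mul_apply, hi]
      have hmap' : ∀ z, g.SameCycle (c x) z → g.SameCycle x (c z) := by
        rintro z ⟨i, hi⟩
        refine ⟨i + 1, ?_⟩
        have hcomm : Commute c (g ^ i) := (Commute.refl c).mul_right (Commute.refl c) |>.zpow_right i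
        have : (g ^ (i + 1)) x = (g ^ i) (g x) := by
          rw [zpow_add_one, Equiv.Perm.mul_apply]
        rw [this]
        calc (g ^ i) (g x) = (g ^ i) (c (c x)) := rfl
          _ = (g ^ i * c) (c x) := rfl
          _ = (c * g ^ i) (c x) := by rw [hcomm.eq]
          _ = c z := by rw [Equiv.Perm.mul_apply, hi]
      -- every point of the support of c is in one of the two g-cycles
      have hsub : ∀ z ∈ c.support, g.SameCycle x z ∨ g.SameCycle (c x) z := by
        intro z hz
        obtain ⟨i, hi⟩ := hx2 (mem_support.mp hz)
        rcases Int.even_or_odd i with ⟨j, hj⟩ | ⟨j, hj⟩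
        · left
          exact ⟨j, by rw [hzpow, show 2 * j = i by omega, hi]⟩
        · right
          refine ⟨j, ?_⟩
          have : (g ^ j) (c x) = (c ^ (2 * j) * c) x := by rw [hzpow]; rfl
          rw [this, ← zpow_add_one, show 2 * j + (1 : ℤ) = i by omega, hi]
      set c1 := g.cycleOf x with hc1def
      set c2 := g.cycleOf (c x) with hc2def
      have hxs : x ∈ g.support := mem_support.mpr hgx
      have hcxs : c x ∈ g.support := mem_support.mpr hgcx
      have hc1 : c1.IsCycle := isCycle_cycleOf _ hgx
      have hc2 : c2.IsCycle := isCycle_cycleOf _ hgcx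
      have hdisj : c1.Disjoint c2 := by
        intro z
        by_cases h1 : g.SameCycle x z
        · right
          exact cycleOf_apply_of_not_sameCycle fun h2 => hnotsame (h1.trans h2.symm)
        · left
          exact cycleOf_apply_of_not_sameCycle h1
      -- union of supports
      have hunion : c1.support ∪ c2.support = c.support := by
        ext z
        simp only [hc1def, hc2def, Finset.mem_union, mem_support_cycleOf_iff]
        constructor
        · rintro (⟨h, -⟩ | ⟨h, -⟩)
          · have hzs : z ∈ g.support := (SameCycle.mem_support_iff h).mp hxs
            have := support_mul_le c c hzs
            simpa using this
          · have hzs : z ∈ g.support := (SameCycle.mem_support_iff h).mp hcxs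
            have := support_mul_le c c hzs
            simpa using this
        · intro hz
          rcases hsub z hz with h | h
          · exact Or.inl ⟨h, hxs⟩
          · exact Or.inr ⟨h, hcxs⟩
      -- supports have the same size
      have hcard12 : c1.support.card = c2.support.card := by
        apply le_antisymm
        · apply Finset.card_le_card_of_injOn c
          · intro z hz
            rw [hc1def, Finset.mem_coe, mem_support_cycleOf_iff] at hz
            rw [hc2def, Finset.mem_coe, mem_support_cycleOf_iff]
            exact ⟨hmap z hz.1, hcxs⟩
          · exact fun a _ b _ h => c.injective h
        · apply Finset.card_le_card_of_injOn c
          · intro z hz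
            rw [hc2def, Finset.mem_coe, mem_support_cycleOf_iff] at hz
            rw [hc1def, Finset.mem_coe, mem_support_cycleOf_iff]
            exact ⟨hmap' z hz.1, hxs⟩
          · exact fun a _ b _ h => c.injective h
      have hcardsum : c1.support.card + c2.support.card = 2 * m := by
        rw [← Finset.card_union_of_disjoint hdisj.disjoint_support, hunion, ← hm]
      have hcard1 : c1.support.card = m := by omega
      have hcard2 : c2.support.card = m := by omega
      -- product decomposition
      have hprod : c1 * c2 = g := by
        ext z
        rw [Equiv.Perm.mul_apply]
        by_cases h1 : g.SameCycle x z
        · rw [cycleOf_apply_of_not_sameCycle fun h2 => hnotsame (h1.trans h2.symm)]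
          exact h1.cycleOf_apply
        · by_cases h2 : g.SameCycle (c x) z
          · rw [h2.cycleOf_apply]
            apply cycleOf_apply_of_not_sameCycle
            intro h3
            exact h1 h3.of_apply_right
          · rw [cycleOf_apply_of_not_sameCycle h2, cycleOf_apply_of_not_sameCycle h1]
            by_contra hne
            have hzc : z ∈ c.support := by
              rw [mem_support]
              intro h
              exact hne (by rw [hg, Equiv.Perm.mul_apply, h, h])
            rcases hsub z hzc with h | h
            exacts [h1 h, h2 h]
      have := cycleType_eq [c1, c2] (by simpa using hprod)
        (by intro f hf
            rcases List.mem_pair.mp hf with rfl | rfl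
            exacts [hc1, hc2])
        (List.pairwise_cons.mpr ⟨fun f hf => by
            rcases List.mem_singleton.mp hf with rfl
            exact hdisj, List.pairwise_singleton _ _⟩)
      rw [this]
      rw [sqType, if_neg hodd, if_neg h2']
      simp only [List.map_cons, List.map_nil, Function.comp_apply, hcard1, hcard2]
      have : c.support.card / 2 = m := by omega
      rw [this]
      rfl

lemma cycleType_mul_self (tau : Equiv.Perm α) :
    (tau * tau).cycleType = tau.cycleType.bind sqType := by
  classical
  have hpd := cycleFactorsFinset_pairwise_disjoint tau
  have hcomm := cycleFactorsFinset_mem_commute tau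
  have hprod := cycleFactorsFinset_noncommProd tau
  have hd2 : Set.Pairwise (tau.cycleFactorsFinset : Set (Equiv.Perm α))
      fun i j => Equiv.Perm.Disjoint
        ((id * id : Equiv.Perm α → Equiv.Perm α) i)
        ((id * id : Equiv.Perm α → Equiv.Perm α) j) := by
    intro i hi j hj hij
    have h := hpd hi hj hij
    exact (h.mul_left h).mul_right (h.mul_left h)
  have key : tau.cycleFactorsFinset.noncommProd
      (id * id : Equiv.Perm α → Equiv.Perm α)
      (hd2.imp fun _ _ => Equiv.Perm.Disjoint.commute) = tau * tau := by
    rw [Finset.noncommProd_mul_distrib (id : Equiv.Perm α → Equiv.Perm α) id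
      hcomm hcomm hcomm]
    rw [hprod]
  rw [← key, Equiv.Perm.Disjoint.cycleType_noncommProd hd2]
  have heach : ∀ c ∈ tau.cycleFactorsFinset,
      ((id * id : Equiv.Perm α → Equiv.Perm α) c).cycleType = sqType c.support.card := by
    intro c hcmem
    exact cycleType_sq_of_isCycle c (mem_cycleFactorsFinset_iff.mp hcmem).1
  rw [Finset.sum_congr rfl heach]
  rw [cycleType_def]
  rw [Multiset.bind, Multiset.join, Function.comp_def]
  rw [Multiset.map_map]
  rfl

lemma sum_map_two_mul (Q : Multiset ℕ) :
    (Q.map fun q => 2 * q).sum = Q.sum + Q.sum := by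
  induction Q using Multiset.induction_on with
  | empty => simp
  | cons a s ih => simp only [Multiset.map_cons, Multiset.sum_cons, ih]; ring

lemma even_multiset_sum (m : Multiset ℕ) (h : ∀ x ∈ m, Even x) : Even m.sum := by
  induction m using Multiset.induction_on with
  | empty => simp
  | cons a s ih =>
    rw [Multiset.sum_cons]
    exact (h a (Multiset.mem_cons_self a s)).add
      (ih fun x hx => h x (Multiset.mem_cons_of_mem hx))

lemma exists_half (M : Multiset ℕ) (h : ∀ a, Even (M.count a)) : ∃ Q, M = Q + Q := by
  induction M using Multiset.strongInductionOn with
  | ih M ih =>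
    rcases Multiset.empty_or_exists_mem M with rfl | ⟨a, ha⟩
    · exact ⟨0, rfl⟩
    · have hca : 2 ≤ M.count a := by
        have h1 : 1 ≤ M.count a := Multiset.one_le_count_iff_mem.mpr ha
        have := h a
        rw [Nat.even_iff] at this
        omega
      have ha' : a ∈ M.erase a := by
        rw [← Multiset.count_pos, Multiset.count_erase_self]
        omega
      set M' := (M.erase a).erase a with hM'def
      have hMeq : M = a ::ₘ a ::ₘ M' := by
        rw [hM'def, Multiset.cons_erase ha', Multiset.cons_erase ha]
      have hlt : M' < M := by
        calc M' < M.erase a := Multiset.erase_lt.mpr ha'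
          _ < M := Multiset.erase_lt.mpr ha
      have hcount : ∀ b, Even (M'.count b) := by
        intro b
        have hb := h b
        by_cases hba : b = a
        · subst hba
          rw [hM'def, Multiset.count_erase_self, Multiset.count_erase_self]
          rw [Nat.even_iff] at hb ⊢
          omega
        · rw [hM'def, Multiset.count_erase_of_ne hba, Multiset.count_erase_of_ne hba]
          exact hb
      obtain ⟨Q, hQ⟩ := ih M' hlt hcount
      refine ⟨a ::ₘ Q, ?_⟩
      rw [hMeq, hQ]
      ext b
      simp only [Multiset.count_cons, Multiset.count_add]
      split <;> omega

lemma bind_pair (Q : Multiset ℕ) :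
    (Q.bind fun q => ({q, q} : Multiset ℕ)) = Q + Q := by
  induction Q using Multiset.induction_on with
  | empty => simp
  | cons a s ih =>
    rw [Multiset.cons_bind, ih]
    ext b
    simp only [Multiset.count_add, Multiset.count_cons, Multiset.insert_eq_cons,
      Multiset.count_singleton]
    split <;> omega

end SquarePermAux

/-- A permutation `σ` of a finite set is a square (`σ = τ²` for some `τ`) iff for
every positive integer `ℓ` the number of cycles of `σ` of length `2ℓ` is even. -/
theorem isSquare_perm_iff_even_even_cycles {α : Type*} [Fintype α] [DecidableEq α]
    (σ : Equiv.Perm α) :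
    (∃ τ : Equiv.Perm α, τ * τ = σ) ↔
      ∀ ℓ : ℕ, 1 ≤ ℓ → Even (σ.cycleType.count (2 * ℓ)) := by
  classical
  open SquarePermAux in
  constructor
  · rintro ⟨τ, rfl⟩ ℓ hℓ
    rw [cycleType_mul_self, Multiset.count_bind]
    apply even_multiset_sum
    intro x hx
    rw [Multiset.mem_map] at hx
    obtain ⟨b, hb, rfl⟩ := hx
    by_cases h1 : Odd b
    · rw [sqType, if_pos h1, Multiset.count_singleton, if_neg]
      · exact Even.zero
      · rintro rfl
        obtain ⟨t, ht⟩ := h1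
        omega
    · by_cases h2 : b = 2
      · rw [sqType, if_neg h1, if_pos h2]
        simp
      · rw [sqType, if_neg h1, if_neg h2]
        have : ({b / 2, b / 2} : Multiset ℕ).count (2 * ℓ) =
            2 * (({b / 2} : Multiset ℕ).count (2 * ℓ)) := by
          rw [Multiset.insert_eq_cons, Multiset.count_cons]
          simp only [Multiset.count_singleton]
          split <;> simp_all
        rw [this]
        exact even_two_mul _
  · intro hcount
    set M := σ.cycleType with hM
    set Mo := M.filter (fun n => Odd n) with hMo
    set Me := M.filter (fun n => ¬ Odd n) with hMe
    have hMsplit : Mo + Me = M := Multiset.filter_add_not _ _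
    have hMeEven : ∀ a, Even (Me.count a) := by
      intro a
      rw [hMe, Multiset.count_filter]
      split
      · rename_i hna
        by_cases haM : a ∈ M
        · have ha2 : 2 ≤ a := two_le_of_mem_cycleType haM
          obtain ⟨ℓ, hℓ⟩ := Nat.not_odd_iff_even.mp hna
          have := hcount ℓ (by omega)
          rwa [show 2 * ℓ = a by omega] at this
        · simp [Multiset.count_eq_zero_of_notMem haM]
      · exact Even.zero
    obtain ⟨Q, hQ⟩ := exists_half Me hMeEven
    have hQmem : ∀ q ∈ Q, q ∈ M := by
      intro q hq
      have : q ∈ Me := by rw [hQ]; exact Multiset.mem_add.mpr (Or.inl hq)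
      exact Multiset.mem_of_mem_filter this
    have hQeven : ∀ q ∈ Q, ¬ Odd q := by
      intro q hq
      have : q ∈ Me := by rw [hQ]; exact Multiset.mem_add.mpr (Or.inl hq)
      exact (Multiset.mem_filter.mp this).2
    set N := Mo + Q.map (fun q => 2 * q) with hN
    -- there is a permutation with cycle type N
    obtain ⟨τ, hτ⟩ : ∃ τ : Equiv.Perm α, τ.cycleType = N := by
      rw [Equiv.Perm.exists_with_cycleType_iff]
      constructor
      · have h2Q : (Q.map fun q => 2 * q).sum = Q.sum + Q.sum := sum_map_two_mul Q
        have hNsum : N.sum = M.sum := by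
          rw [hN, Multiset.sum_add, h2Q, ← hMsplit, Multiset.sum_add, hQ, Multiset.sum_add]
          try ring
        rw [hNsum, hM, sum_cycleType]
        exact le_trans (Finset.card_le_univ _) (le_of_eq (Finset.card_univ))
      · intro a haN
        rw [hN, Multiset.mem_add] at haN
        rcases haN with h | h
        · exact two_le_of_mem_cycleType (Multiset.mem_of_mem_filter h)
        · obtain ⟨q, hq, rfl⟩ := Multiset.mem_map.mp h
          have := two_le_of_mem_cycleType (hQmem q hq)
          omega
    -- compute the cycle type of τ * τ
    have hττ : (τ * τ).cycleType = M := by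
      rw [cycleType_mul_self, hτ, hN, Multiset.add_bind]
      have hMoBind : Mo.bind sqType = Mo := by
        have : Mo.bind sqType = Mo.bind (fun a => {a}) :=
          Multiset.bind_congr fun a ha => by
            rw [sqType, if_pos (Multiset.mem_filter.mp ha).2]
        rw [this]
        rw [show (fun a => ({a} : Multiset ℕ)) = (fun a => {id a}) from rfl]
        rw [Multiset.bind_singleton, Multiset.map_id]
      have hQBind : (Q.map fun q => 2 * q).bind sqType = Me := by
        rw [Multiset.bind_map]
        have : Q.bind (fun q => sqType (2 * q)) = Q.bind (fun q => ({q, q} : Multiset ℕ)) := by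
          apply Multiset.bind_congr
          intro q hq
          have h2q : 2 ≤ q := two_le_of_mem_cycleType (hQmem q hq)
          rw [sqType, if_neg, if_neg]
          · rw [show 2 * q / 2 = q by omega]
          · omega
          · rw [Nat.not_odd_iff_even]; exact ⟨q, by ring⟩
        rw [this, bind_pair, hQ]
      rw [hMoBind, hQBind, hMsplit]
    have hconj : IsConj (τ * τ) σ := isConj_of_cycleType_eq (by rw [hττ, hM])
    obtain ⟨g, hg⟩ := isConj_iff.mp hconj
    refine ⟨g * τ * g⁻¹, ?_⟩
    rw [← hg]
    group
end
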